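/- Under identical and 0/1 preferences (bundle utility equals bundle size), a complete SumAvg-envy-free allocation of m resources to agents with ascending weights w_1 ≤ ... ≤ w_n exists if and only if there exist nonnegative integers k_1 ≤ k_2 ≤ ... ≤ k_n with ∑ k_i = m and k_i / w_i ≥ k_{i+1} / w_{i+1} for all i. -/

import Mathlib

/-- Under identical 0/1 utilities (bundle utility = bundle size) and agents with
ascending positive weights, a complete SumAvg-envy-free allocation of `m` resources
exists iff there are nonnegative integers `k_1 ≤ ... ≤ k_n` summing to `m` with
`k_i / w_i ≥ k_{i+1} / w_{i+1}` for all consecutive `i`. -/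
theorem sumavg_allocation_exists_iff (n m : ℕ) (w : Fin n → ℝ)
    (hw : ∀ i, 0 < w i) (hwm : Monotone w) :
    (∃ π : Fin m → Fin n, ∀ i j : Fin n,
        (Finset.univ.filter (fun r => π r = i)).card ≥
          (Finset.univ.filter (fun r => π r = j)).card ∨
        ((Finset.univ.filter (fun r => π r = i)).card : ℝ) / w i ≥
          ((Finset.univ.filter (fun r => π r = j)).card : ℝ) / w j) ↔
    (∃ k : Fin n → ℕ, Monotone k ∧ (∑ i, k i) = m ∧
        ∀ i : ℕ, (h : i + 1 < n) →
          (k ⟨i, Nat.lt_of_succ_lt h⟩ : ℝ) / w ⟨i, Nat.lt_of_succ_lt h⟩ ≥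
            (k ⟨i + 1, h⟩ : ℝ) / w ⟨i + 1, h⟩) := by
  constructor
  · rintro ⟨π, H⟩
    set c : Fin n → ℕ := fun i => (Finset.univ.filter (fun r => π r = i)).card with hc
    have H' : ∀ i j : Fin n, c i ≥ c j ∨ (c i : ℝ) / w i ≥ (c j : ℝ) / w j := H
    -- key: smaller bundle has larger or equal average
    have key : ∀ a b : Fin n, c a < c b → (c b : ℝ) / w b ≤ (c a : ℝ) / w a := by
      intro a b hab
      rcases H' a b with h | h
      · omega
      · exact h
    -- hence smaller bundle has strictly smaller weight
    have keyw : ∀ a b : Fin n, c a < c b → w a < w b := by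
      intro a b hab
      have h1 := key a b hab
      by_contra h
      push_neg at h
      have h2 : (c a : ℝ) / w a ≤ (c a : ℝ) / w b :=
        div_le_div_of_nonneg_left (by positivity) (hw b) h
      have h3 : (c a : ℝ) / w b < (c b : ℝ) / w b :=
        (div_lt_div_iff_of_pos_right (hw b)).mpr (by exact_mod_cast hab)
      linarith
    -- sort pairs (c i, w i) lexicographically
    set f : Fin n → ℕ ×ₗ ℝ := fun i => toLex (c i, w i) with hf
    set σ := Tuple.sort f with hσ
    have hsorted : Monotone (f ∘ σ) := Tuple.monotone_sort f
    set k : Fin n → ℕ := fun i => c (σ i) with hk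
    have hkm : Monotone k := by
      intro i j hij
      have h := hsorted hij
      rcases (Prod.Lex.le_iff (x := toLex (c (σ i), w (σ i))) (y := toLex (c (σ j), w (σ j)))).mp h with h' | h'
      · exact h'.le
      · exact h'.1.le
    have hwσ : Monotone (w ∘ σ) := by
      intro i j hij
      have h := hsorted hij
      rcases (Prod.Lex.le_iff (x := toLex (c (σ i), w (σ i))) (y := toLex (c (σ j), w (σ j)))).mp h with h' | h'
      · exact (keyw _ _ h').le
      · exact h'.2
    have hwe : w ∘ σ = w := by
      have := Tuple.unique_monotone (f := w) (σ := σ) (τ := Equiv.refl (Fin n))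
        hwσ (by simpa using hwm)
      simpa using this
    have hwi : ∀ i, w (σ i) = w i := fun i => congrFun hwe i
    refine ⟨k, hkm, ?_, ?_⟩
    · have h1 : ∑ i, k i = ∑ i, c i := Equiv.sum_comp σ c
      rw [h1, hc]
      rw [← Finset.card_eq_sum_card_fiberwise (f := π) (s := Finset.univ)
        (t := Finset.univ) (fun x _ => Finset.mem_univ _)]
      simp
    · intro i h
      set a : Fin n := ⟨i, Nat.lt_of_succ_lt h⟩ with ha
      set b : Fin n := ⟨i + 1, h⟩ with hb
      have hab : a ≤ b := Fin.mk_le_mk.mpr (Nat.le_succ i)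
      rcases lt_or_eq_of_le (hkm hab) with hlt | heq
      · have hkey := key (σ a) (σ b) hlt
        rw [hwi a, hwi b] at hkey
        exact hkey
      · rw [← heq]
        exact div_le_div_of_nonneg_left (by positivity) (hw a) (hwm hab)
  · rintro ⟨k, hkm, hsum, hratio⟩
    -- ratios are antitone over all pairs
    have hrat0 : ∀ i : Fin n, ∀ d : ℕ, ∀ hj : (i:ℕ) + d < n,
        (k ⟨(i:ℕ) + d, hj⟩ : ℝ) / w ⟨(i:ℕ) + d, hj⟩ ≤ (k i : ℝ) / w i := by
      intro i d
      induction d with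
      | zero =>
        intro hj
        have he : (⟨(i:ℕ) + 0, hj⟩ : Fin n) = i := by apply Fin.ext; simp
        rw [he]
      | succ d ih =>
        intro hj
        have hmid : (i : ℕ) + d < n := by omega
        have hlt : (i : ℕ) + d + 1 < n := by omega
        have h1 := hratio ((i : ℕ) + d) hlt
        exact le_trans h1 (ih hmid)
    have hrat : ∀ i j : Fin n, i ≤ j → (k j : ℝ) / w j ≤ (k i : ℝ) / w i := by
      intro i j hij
      have hd : (i:ℕ) + ((j:ℕ) - (i:ℕ)) < n := by
        have := j.isLt
        have := Fin.le_def.mp hij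
        omega
      have hje : j = ⟨(i:ℕ) + ((j:ℕ) - (i:ℕ)), hd⟩ := by
        apply Fin.ext
        have := Fin.le_def.mp hij
        simp; omega
      rw [hje]
      exact hrat0 i _ hd
    -- build the allocation from an equivalence
    have hcard : Fintype.card (Σ i : Fin n, Fin (k i)) = Fintype.card (Fin m) := by
      simp [hsum]
    let e : (Σ i : Fin n, Fin (k i)) ≃ Fin m := Fintype.equivOfCardEq hcard
    refine ⟨fun r => (e.symm r).1, ?_⟩
    have hfib : ∀ i : Fin n,
        (Finset.univ.filter (fun r : Fin m => (e.symm r).1 = i)).card = k i := by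
      intro i
      have hb := Finset.card_bij
        (s := (Finset.univ : Finset (Fin (k i))))
        (t := Finset.univ.filter (fun r : Fin m => (e.symm r).1 = i))
        (fun x _ => e ⟨i, x⟩)
        (by
          intro x hx
          simp)
        (by
          intro x hx y hy hxy
          have h1 : (⟨i, x⟩ : Σ i', Fin (k i')) = ⟨i, y⟩ := e.injective hxy
          have h2 := (Sigma.mk.inj_iff.mp h1).2
          exact eq_of_heq h2)
        (by
          intro r hr
          have hr' : (e.symm r).1 = i := by simpa using hr
          refine ⟨hr' ▸ (e.symm r).2, Finset.mem_univ _, ?_⟩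
          have hs : (⟨i, hr' ▸ (e.symm r).2⟩ : Σ i', Fin (k i')) = e.symm r := by
            subst hr'; rfl
          show e ⟨i, hr' ▸ (e.symm r).2⟩ = r
          rw [hs, Equiv.apply_symm_apply])
      simpa using hb.symm
    intro i j
    rw [hfib i, hfib j]
    rcases le_or_gt j i with h | h
    · exact Or.inl (hkm h)
    · exact Or.inr (hrat i j h.le)
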